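/- Suppose g is n-times differentiable on an interval [a,b] containing the support of X and m = E[X], with g^{(j)}(x) ≥ 0 for all x in [a,b] and all 3 ≤ j ≤ n. If the n-th derivative g^{(n)} is bounded on [a,b] by M and E[|X-m|^n] < ∞, then E[g(X)] - g(m) - (g''(m)/2)·Var[X] ≤ Σ_{j=3}^{n-1} (E[|X-m|^j]/j!)·g^{(j)}(m) + (M/n!)·E[|X-m|^n]. -/

import Mathlib

open MeasureTheory ProbabilityTheory

lemma taylor_key (n : ℕ) (hn : 1 ≤ n) (H : ℕ → ℝ → ℝ) (c d : ℝ) (hcd : c < d)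
    (hH : ∀ k < n, ∀ t ∈ Set.Icc c d, HasDerivAt (H k) (H (k + 1) t) t) :
    ∃ x' ∈ Set.Ioo c d,
      H 0 d - ∑ j ∈ Finset.range n, (d - c) ^ j / (Nat.factorial j) * H j c
        = H n x' * (d - c) ^ n / (Nat.factorial n) := by
  set s := Set.Icc c d with hs_def
  have hs : UniqueDiffOn ℝ s := uniqueDiffOn_Icc hcd
  have hiter : ∀ k, k ≤ n → Set.EqOn (iteratedDerivWithin k (H 0) s) (H k) s := by
    intro k
    induction k with
    | zero => intro _ x hx; simp
    | succ k ih =>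
      intro hk x hx
      have hkn : k < n := Nat.lt_of_succ_le hk
      have ihh := ih hkn.le
      rw [iteratedDerivWithin_succ, derivWithin_congr ihh (ihh hx)]
      exact ((hH k hkn x hx).hasDerivWithinAt).derivWithin (hs x hx)
  have hdiff : ∀ k, k < n → DifferentiableOn ℝ (H k) s :=
    fun k hk x hx => ((hH k hk x hx).differentiableAt).differentiableWithinAt
  have hcont : ContDiffOn ℝ (n - 1 : ℕ) (H 0) s := by
    apply contDiffOn_of_differentiableOn_deriv
    intro m hm
    have hmn : m < n := by
      have : m ≤ n - 1 := by exact_mod_cast hm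
      omega
    exact (hdiff m hmn).congr (fun x hx => hiter m hmn.le hx)
  have hdiff' : DifferentiableOn ℝ (iteratedDerivWithin (n - 1) (H 0) s) (Set.Ioo c d) := by
    refine DifferentiableOn.congr (f := H (n - 1)) ?_
      (fun x hx => hiter (n - 1) (by omega) (Set.Ioo_subset_Icc_self hx))
    exact fun x hx => ((hH (n - 1) (by omega) x
      (Set.Ioo_subset_Icc_self hx)).differentiableAt).differentiableWithinAt
  have hu : Set.uIcc c d = s := Set.uIcc_of_le hcd.le
  have hu' : Set.uIoo c d = Set.Ioo c d := Set.uIoo_of_le hcd.le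
  obtain ⟨x', hx', heq⟩ := taylor_mean_remainder_lagrange (n := n - 1) (x := d) (x₀ := c) hcd.ne
    (by rw [hu]; exact hcont) (by rw [hu, hu']; exact hdiff')
  rw [hu'] at hx'
  rw [hu] at heq
  refine ⟨x', hx', ?_⟩
  have h1 : n - 1 + 1 = n := by omega
  rw [taylor_within_apply, h1] at heq
  have hsum : ∑ j ∈ Finset.range n, (d - c) ^ j / (Nat.factorial j) * H j c
      = ∑ k ∈ Finset.range n, (((Nat.factorial k : ℝ))⁻¹ * (d - c) ^ k) •
          iteratedDerivWithin k (H 0) s c := by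
    refine Finset.sum_congr rfl fun k hk => ?_
    rw [hiter k (Finset.mem_range.mp hk).le (Set.left_mem_Icc.mpr hcd.le), smul_eq_mul]
    ring
  rw [hsum, heq, hiter n le_rfl (Set.Ioo_subset_Icc_self hx')]

lemma taylor_expand (n : ℕ) (hn : 1 ≤ n) (G : ℕ → ℝ → ℝ) (a b m : ℝ)
    (hG : ∀ k < n, ∀ t ∈ Set.Icc a b, HasDerivAt (G k) (G (k + 1) t) t)
    (hmI : m ∈ Set.Icc a b) (x : ℝ) (hx : x ∈ Set.Icc a b) :
    ∃ ξ ∈ Set.Icc a b,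
      G 0 x - ∑ j ∈ Finset.range n, (x - m) ^ j / (Nat.factorial j) * G j m
        = G n ξ * (x - m) ^ n / (Nat.factorial n) := by
  rcases lt_trichotomy x m with hlt | heq | hgt
  · -- reflect : H k t = (-1)^k * G k (2m - t) on [m, 2m - x]
    set H : ℕ → ℝ → ℝ := fun k t => (-1 : ℝ) ^ k * G k (2 * m - t) with hH_def
    have hcd : m < 2 * m - x := by linarith
    have hmem : ∀ t ∈ Set.Icc m (2 * m - x), 2 * m - t ∈ Set.Icc a b := by
      intro t ht
      obtain ⟨ht1, ht2⟩ := ht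
      exact ⟨by linarith [hx.1], by linarith [hmI.2]⟩
    have hHderiv : ∀ k < n, ∀ t ∈ Set.Icc m (2 * m - x),
        HasDerivAt (H k) (H (k + 1) t) t := by
      intro k hk t ht
      have hphi : HasDerivAt (fun t : ℝ => 2 * m - t) (-1) t := by
        simpa using (hasDerivAt_id t).const_sub (2 * m)
      have hc := ((hG k hk (2 * m - t) (hmem t ht)).comp t hphi).const_mul ((-1 : ℝ) ^ k)
      have : (-1 : ℝ) ^ k * (G (k + 1) (2 * m - t) * -1)
          = (-1 : ℝ) ^ (k + 1) * G (k + 1) (2 * m - t) := by ring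
      rw [this] at hc
      exact hc
    obtain ⟨x', hx', heq⟩ := taylor_key n hn H m (2 * m - x) hcd hHderiv
    refine ⟨2 * m - x', hmem x' (Set.Ioo_subset_Icc_self hx'), ?_⟩
    have hneg : ∀ j : ℕ, ((2 * m - x) - m) ^ j * (-1 : ℝ) ^ j = (x - m) ^ j := by
      intro j
      have h2 : ((2 * m - x) - m) = -(x - m) := by ring
      rw [h2, ← mul_pow]
      congr 1
      ring
    have h0 : H 0 (2 * m - x) = G 0 x := by simp [hH_def]
    have hsum : ∑ j ∈ Finset.range n, ((2 * m - x) - m) ^ j / (Nat.factorial j) * H j m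
        = ∑ j ∈ Finset.range n, (x - m) ^ j / (Nat.factorial j) * G j m := by
      refine Finset.sum_congr rfl fun j _ => ?_
      have h2m : 2 * m - m = m := by ring
      have : H j m = (-1 : ℝ) ^ j * G j m := by simp [hH_def, h2m]
      rw [this, ← hneg j]
      ring
    have hrem : H n x' * ((2 * m - x) - m) ^ n / (Nat.factorial n)
        = G n (2 * m - x') * (x - m) ^ n / (Nat.factorial n) := by
      have : H n x' = (-1 : ℝ) ^ n * G n (2 * m - x') := rfl
      rw [this, ← hneg n]
      ring
    rw [h0, hsum, hrem] at heq
    exact heq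
  · refine ⟨m, hmI, ?_⟩
    subst heq
    have hsum : ∑ j ∈ Finset.range n, (x - x) ^ j / (Nat.factorial j) * G j x
        = G 0 x := by
      rw [Finset.sum_eq_single_of_mem 0 (Finset.mem_range.mpr (by omega))]
      · simp
      · intro j _ hj
        simp [zero_pow hj]
    rw [hsum]
    simp [zero_pow (by omega : n ≠ 0)]
  · obtain ⟨x', hx', heq⟩ := taylor_key n hn G m x hgt
      (fun k hk t ht => hG k hk t ⟨le_trans hmI.1 ht.1, le_trans ht.2 hx.2⟩)
    exact ⟨x', ⟨le_trans hmI.1 (Set.Ioo_subset_Icc_self hx').1,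
      le_trans (Set.Ioo_subset_Icc_self hx').2 hx.2⟩, heq⟩

theorem stmt_12 {Ω : Type*} [MeasurableSpace Ω] (μ : Measure Ω) [IsProbabilityMeasure μ]
    (X : Ω → ℝ) (a b : ℝ) (hI : ∀ ω, X ω ∈ Set.Icc a b)
    (n : ℕ) (hn : 3 ≤ n) (G : ℕ → ℝ → ℝ)
    (hG : ∀ k < n, ∀ t ∈ Set.Icc a b, HasDerivAt (G k) (G (k + 1) t) t)
    (hpos : ∀ j, 3 ≤ j → j ≤ n → ∀ t ∈ Set.Icc a b, 0 ≤ G j t)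
    (M : ℝ) (hM : ∀ t ∈ Set.Icc a b, |G n t| ≤ M)
    (m : ℝ) (hm : m = ∫ ω, X ω ∂μ) (hmI : m ∈ Set.Icc a b)
    (hmom : ∀ j ≤ n, Integrable (fun ω => |X ω - m| ^ j) μ)
    (hgX : Integrable (fun ω => G 0 (X ω)) μ)
    (hX2 : MemLp X 2 μ) :
    (∫ ω, G 0 (X ω) ∂μ) - G 0 m - G 2 m / 2 * variance X μ ≤
      (∑ j ∈ Finset.Ico 3 n,
        (∫ ω, |X ω - m| ^ j ∂μ) / (Nat.factorial j) * G j m) +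
      M / (Nat.factorial n) * ∫ ω, |X ω - m| ^ n ∂μ := by
  have hfac : (0 : ℝ) < (Nat.factorial n : ℝ) := by positivity
  -- pointwise bound
  have hpt : ∀ ω, G 0 (X ω) ≤ G 0 m + G 1 m * (X ω - m) + G 2 m / 2 * (X ω - m) ^ 2
      + (∑ j ∈ Finset.Ico 3 n, |X ω - m| ^ j / (Nat.factorial j) * G j m)
      + M / (Nat.factorial n) * |X ω - m| ^ n := by
    intro ω
    set x := X ω with hx_def
    obtain ⟨ξ, hξ, heq⟩ := taylor_expand n (by omega) G a b m hG hmI x (hI ω)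
    have hsplit : ∑ j ∈ Finset.range n, (x - m) ^ j / (Nat.factorial j) * G j m
        = (∑ j ∈ Finset.Ico 0 3, (x - m) ^ j / (Nat.factorial j) * G j m)
        + ∑ j ∈ Finset.Ico 3 n, (x - m) ^ j / (Nat.factorial j) * G j m := by
      rw [Finset.range_eq_Ico, ← Finset.sum_Ico_consecutive _ (Nat.zero_le 3) hn]
    have hfirst : ∑ j ∈ Finset.Ico 0 3, (x - m) ^ j / (Nat.factorial j) * G j m
        = G 0 m + G 1 m * (x - m) + G 2 m / 2 * (x - m) ^ 2 := by
      rw [← Finset.range_eq_Ico]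
      rw [Finset.sum_range_succ, Finset.sum_range_succ, Finset.sum_range_succ,
        Finset.sum_range_zero]
      norm_num [Nat.factorial]
      ring
    have hS : ∑ j ∈ Finset.Ico 3 n, (x - m) ^ j / (Nat.factorial j) * G j m
        ≤ ∑ j ∈ Finset.Ico 3 n, |x - m| ^ j / (Nat.factorial j) * G j m := by
      refine Finset.sum_le_sum fun j hj => ?_
      obtain ⟨hj3, hjn⟩ := Finset.mem_Ico.mp hj
      have h1 : (0 : ℝ) ≤ G j m := hpos j hj3 hjn.le m hmI
      have h2 : (x - m) ^ j ≤ |x - m| ^ j := by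
        rw [← abs_pow]; exact le_abs_self _
      have h3 : (x - m) ^ j / (Nat.factorial j) ≤ |x - m| ^ j / (Nat.factorial j) := by
        exact (div_le_div_iff_of_pos_right (by positivity)).mpr h2
      exact mul_le_mul_of_nonneg_right h3 h1
    have hR : G n ξ * (x - m) ^ n / (Nat.factorial n)
        ≤ M / (Nat.factorial n) * |x - m| ^ n := by
      have h1 : G n ξ * (x - m) ^ n ≤ M * |x - m| ^ n := by
        calc G n ξ * (x - m) ^ n ≤ |G n ξ * (x - m) ^ n| := le_abs_self _
          _ = |G n ξ| * |x - m| ^ n := by rw [abs_mul, abs_pow]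
          _ ≤ M * |x - m| ^ n := by
              apply mul_le_mul_of_nonneg_right (hM ξ hξ) (by positivity)
      calc G n ξ * (x - m) ^ n / (Nat.factorial n)
          ≤ M * |x - m| ^ n / (Nat.factorial n) := (div_le_div_iff_of_pos_right hfac).mpr h1
        _ = M / (Nat.factorial n) * |x - m| ^ n := by ring
    have := heq
    rw [hsplit, hfirst] at this
    linarith
  -- integrability of the pieces
  have hX1 : Integrable X μ := hX2.integrable one_le_two
  have hf1 : Integrable (fun ω => X ω - m) μ := hX1.sub (integrable_const m)
  have hf2 : Integrable (fun ω => (X ω - m) ^ 2) μ :=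
    (hmom 2 (by omega)).congr (ae_of_all _ fun ω => sq_abs (X ω - m))
  have hfS : ∀ j ∈ Finset.Ico 3 n,
      Integrable (fun ω => |X ω - m| ^ j / (Nat.factorial j) * G j m) μ :=
    fun j hj => ((hmom j (Finset.mem_Ico.mp hj).2.le).div_const _).mul_const _
  have hsumInt : Integrable
      (fun ω => ∑ j ∈ Finset.Ico 3 n, |X ω - m| ^ j / (Nat.factorial j) * G j m) μ :=
    integrable_finset_sum _ hfS
  have hfN : Integrable (fun ω => |X ω - m| ^ n) μ := hmom n le_rfl
  have i0 : Integrable (fun _ : Ω => G 0 m) μ := integrable_const _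
  have i1 : Integrable (fun ω => G 1 m * (X ω - m)) μ := hf1.const_mul _
  have i2 : Integrable (fun ω => G 2 m / 2 * (X ω - m) ^ 2) μ := hf2.const_mul _
  have iN : Integrable (fun ω => M / (Nat.factorial n) * |X ω - m| ^ n) μ := hfN.const_mul _
  have i01 : Integrable (fun ω => G 0 m + G 1 m * (X ω - m)) μ := i0.add i1
  have i012 : Integrable (fun ω => G 0 m + G 1 m * (X ω - m)
      + G 2 m / 2 * (X ω - m) ^ 2) μ := i01.add i2
  have i0123 : Integrable (fun ω => G 0 m + G 1 m * (X ω - m)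
      + G 2 m / 2 * (X ω - m) ^ 2
      + ∑ j ∈ Finset.Ico 3 n, |X ω - m| ^ j / (Nat.factorial j) * G j m) μ :=
    i012.add hsumInt
  have iAll : Integrable (fun ω => G 0 m + G 1 m * (X ω - m)
      + G 2 m / 2 * (X ω - m) ^ 2
      + (∑ j ∈ Finset.Ico 3 n, |X ω - m| ^ j / (Nat.factorial j) * G j m)
      + M / (Nat.factorial n) * |X ω - m| ^ n) μ := i0123.add iN
  have hmain := integral_mono hgX iAll hpt
  rw [integral_add i0123 iN] at hmain
  rw [integral_add i012 hsumInt] at hmain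
  rw [integral_add i01 i2] at hmain
  rw [integral_add i0 i1] at hmain
  rw [integral_const] at hmain
  rw [integral_const_mul _ _] at hmain
  rw [integral_const_mul _ _] at hmain
  rw [integral_const_mul _ _] at hmain
  rw [integral_finset_sum _ hfS] at hmain
  have h1 : ∫ ω, (X ω - m) ∂μ = 0 := by
    rw [integral_sub hX1 (integrable_const m), integral_const]
    simp [← hm]
  have h2 : ∫ ω, (X ω - m) ^ 2 ∂μ = variance X μ := by
    rw [variance_eq_integral hX2.aemeasurable]
    apply integral_congr_ae
    apply ae_of_all
    intro ω
    simp [hm, Pi.pow_apply, Pi.sub_apply]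
  have hterm : ∀ j ∈ Finset.Ico 3 n,
      (∫ ω, |X ω - m| ^ j / (Nat.factorial j) * G j m ∂μ)
        = (∫ ω, |X ω - m| ^ j ∂μ) / (Nat.factorial j) * G j m := by
    intro j hj
    rw [integral_mul_const, integral_div]
  rw [Finset.sum_congr rfl hterm, h1, h2] at hmain
  simp only [probReal_univ, measure_univ, ENNReal.toReal_one, one_smul, mul_zero] at hmain
  linarith
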